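/- Define α_m for m ≥ 1 by α₁ = 1 and α_m = ∑_{m₁+⋯+m_ν = m, ν ≥ 2, m_i ≥ 1} α_{m₁}⋯α_{m_ν} for m ≥ 2 (sum over all ordered compositions of m into at least two positive parts). Then sup_{m≥1} (1/m) log α_m < +∞; equivalently, there exists C > 0 such that α_m ≤ C^m for all m ≥ 1. -/

import Mathlib

open Finset

-- ℕ catalan convolution reindexed
lemma catsum (n : ℕ) :
    ∑ a ∈ Finset.Ico 1 (n+2), catalan (a-1) * catalan (n+2-a-1) = catalan (n+1) := by
  rw [catalan_succ, Fin.sum_univ_eq_sum_range (fun i => catalan i * catalan (n - i))]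
  rw [Finset.sum_Ico_eq_sum_range]
  have h : n + 2 - 1 = n + 1 := by omega
  rw [h]
  apply Finset.sum_congr rfl
  intro i hi
  simp only [Finset.mem_range] at hi
  have e1 : 1 + i - 1 = i := by omega
  have e2 : n + 2 - (1 + i) - 1 = n - i := by omega
  rw [e1, e2]

noncomputable def ff (m : ℕ) : ℝ := 2^m * (catalan (m-1) : ℝ) / 2

lemma ff_nonneg (m : ℕ) : 0 ≤ ff m := by
  unfold ff; positivity

lemma ff_conv {m : ℕ} (hm : 2 ≤ m) :
    ∑ a ∈ Finset.Ico 1 m, ff a * ff (m - a) = ff m / 2 := by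
  obtain ⟨n, rfl⟩ : ∃ n, m = n + 2 := ⟨m - 2, by omega⟩
  have : ∀ a ∈ Finset.Ico 1 (n+2), ff a * ff (n+2-a) =
      (2:ℝ)^(n+2)/4 * ((catalan (a-1) * catalan (n+2-a-1) : ℕ) : ℝ) := by
    intro a ha
    simp only [Finset.mem_Ico] at ha
    have hpow : (2:ℝ)^a * (2:ℝ)^(n+2-a) = (2:ℝ)^(n+2) := by
      rw [← pow_add]; congr 1; omega
    unfold ff
    push_cast
    linear_combination ((catalan (a-1) : ℝ) * (catalan (n+2-a-1) : ℝ) / 4) * hpow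
  rw [Finset.sum_congr rfl this, ← Finset.mul_sum, ← Nat.cast_sum, catsum]
  unfold ff
  simp
  ring

noncomputable def TT (m : ℕ) : ℝ := ∑ c : Composition m, (c.blocks.map ff).prod

noncomputable def SS (m : ℕ) : ℝ :=
  ∑ c ∈ Finset.univ.filter (fun c : Composition m => 2 ≤ c.length),
    (c.blocks.map ff).prod

lemma prod_blocksFun (h : ℕ → ℝ) {n : ℕ} (c : Composition n) :
    ∏ i, h (c.blocksFun i) = (c.blocks.map h).prod := by
  rw [← c.ofFn_blocksFun, List.map_ofFn, List.prod_ofFn]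
  rfl

lemma TT_split {m : ℕ} (hm : 1 ≤ m) : TT m = ff m + SS m := by
  unfold TT SS
  rw [← Finset.sum_filter_add_sum_filter_not Finset.univ
    (fun c : Composition m => 2 ≤ c.length)]
  rw [add_comm]
  congr 1
  have hsingle : Finset.univ.filter (fun c : Composition m => ¬ 2 ≤ c.length)
      = {Composition.single m hm} := by
    ext c
    simp only [Finset.mem_filter, Finset.mem_univ, true_and, Finset.mem_singleton, not_le]
    constructor
    · intro hc
      have h1 : 0 < c.length := c.length_pos_of_pos hm
      have : c.length = 1 := by omega
      exact (Composition.eq_single_iff_length hm).2 this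
    · intro hc; subst hc; rw [Composition.single_length hm]; omega
  rw [hsingle, Finset.sum_singleton]
  simp [Composition.single, ff]

lemma SS_rec {m : ℕ} (hm : 1 ≤ m) :
    SS m = ∑ a ∈ Finset.Ico 1 m, ff a * TT (m - a) := by
  unfold SS TT
  simp only [Finset.mul_sum]
  have hs : ∑ x ∈ Finset.Ico 1 m, ∑ i : Composition (m - x), ff x * (List.map ff i.blocks).prod
      = ∑ p ∈ (Finset.Ico 1 m).sigma (fun a => (Finset.univ : Finset (Composition (m-a)))),
        ff p.1 * (List.map ff p.2.blocks).prod := by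
    rw [Finset.sum_sigma]
  rw [hs]
  refine Finset.sum_bij' (i := ?_) (j := ?_) ?_ ?_ ?_ ?_ ?_
  · -- i : composition → sigma
    intro c hc
    simp only [Finset.mem_filter] at hc
    have hne : c.blocks ≠ [] := by
      intro h
      have := c.blocks_length
      rw [h] at this
      simp at this
      omega
    refine ⟨c.blocks.headI, ⟨c.blocks.tail, ?_, ?_⟩⟩
    · intro i hi
      exact c.blocks_pos (List.mem_of_mem_tail hi)
    · have hsum := c.blocks_sum
      obtain ⟨b, l, hb⟩ := List.exists_cons_of_ne_nil hne
      rw [hb] at hsum ⊢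
      simp at hsum ⊢
      omega
  · -- j : sigma → composition
    intro p hp
    simp only [Finset.mem_sigma, Finset.mem_Ico] at hp
    refine ⟨p.1 :: p.2.blocks, ?_, ?_⟩
    · intro i hi
      rcases List.mem_cons.1 hi with h | h
      · omega
      · exact p.2.blocks_pos h
    · simp [p.2.blocks_sum]; omega
  · -- hi : i maps into sigma set
    intro c hc
    simp only [Finset.mem_filter] at hc
    have hlen : 2 ≤ c.blocks.length := hc.2
    obtain ⟨b, l, hb⟩ := List.exists_cons_of_ne_nil (by
      intro h; rw [h] at hlen; simp at hlen : c.blocks ≠ [])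
    have hsum := c.blocks_sum
    rw [hb] at hsum
    have hbpos : 0 < b := c.blocks_pos (by rw [hb]; exact List.mem_cons_self (a := b) (l := l))
    have hl : l ≠ [] := by
      rw [hb] at hlen; intro h; rw [h] at hlen; simp at hlen
    obtain ⟨b', l', hb'⟩ := List.exists_cons_of_ne_nil hl
    have hb'pos : 0 < b' := c.blocks_pos (by rw [hb, hb']; simp)
    have hsum' : b + (b' + l'.sum) = m := by rw [hb'] at hsum; simpa using hsum
    simp only [Finset.mem_sigma, Finset.mem_univ, Finset.mem_Ico, and_true]
    rw [hb]
    simp only [List.headI_cons]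
    omega
  · -- hj
    intro p hp
    simp only [Finset.mem_sigma, Finset.mem_Ico] at hp
    simp only [Finset.mem_filter, Finset.mem_univ, true_and]
    show 2 ≤ (p.1 :: p.2.blocks).length
    simp
    have : 0 < p.2.length := p.2.length_pos_of_pos (by omega)
    have := p.2.blocks_length
    omega
  · -- left_inv
    intro c hc
    apply Composition.ext
    simp only
    have hlen : 2 ≤ c.blocks.length := (Finset.mem_filter.1 hc).2
    obtain ⟨b, l, hb⟩ := List.exists_cons_of_ne_nil (by
      intro h; rw [h] at hlen; simp at hlen : c.blocks ≠ [])
    rw [hb]; simp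
  · -- right_inv
    intro p hp
    obtain ⟨a, d⟩ := p
    show (⟨(a :: d.blocks).headI, _⟩ : Σ a : ℕ, Composition (m - a)) = ⟨a, d⟩
    have h1 : (a :: d.blocks).headI = a := rfl
    congr 1
  · -- values
    intro c hc
    have hlen : 2 ≤ c.blocks.length := (Finset.mem_filter.1 hc).2
    obtain ⟨b, l, hb⟩ := List.exists_cons_of_ne_nil (by
      intro h; rw [h] at hlen; simp at hlen : c.blocks ≠ [])
    show (c.blocks.map ff).prod = ff c.blocks.headI * ((c.blocks.tail).map ff).prod
    rw [hb]; simp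

lemma TT_le (m : ℕ) (hm : 1 ≤ m) : TT m ≤ 2 * ff m := by
  induction m using Nat.strong_induction_on with
  | _ m ih =>
  rcases eq_or_lt_of_le hm with h1 | h2
  · -- m = 1
    rw [TT_split hm, SS_rec hm, ← h1]
    simp [ff]
  · -- m ≥ 2
    rw [TT_split hm, SS_rec hm]
    have hb : ∑ a ∈ Finset.Ico 1 m, ff a * TT (m - a)
        ≤ ∑ a ∈ Finset.Ico 1 m, ff a * (2 * ff (m - a)) := by
      apply Finset.sum_le_sum
      intro a ha
      simp only [Finset.mem_Ico] at ha
      have := ih (m - a) (by omega) (by omega)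
      exact mul_le_mul_of_nonneg_left this (ff_nonneg a)
    have hc : ∑ a ∈ Finset.Ico 1 m, ff a * (2 * ff (m - a)) = ff m := by
      have := ff_conv (m := m) (by omega)
      calc ∑ a ∈ Finset.Ico 1 m, ff a * (2 * ff (m - a))
          = 2 * ∑ a ∈ Finset.Ico 1 m, ff a * ff (m - a) := by
            rw [Finset.mul_sum]; apply Finset.sum_congr rfl; intros; ring
        _ = ff m := by rw [this]; ring
    linarith

theorem stmt_12 (α : ℕ → ℝ) (hα1 : α 1 = 1)
    (hrec : ∀ m : ℕ, 2 ≤ m →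
      α m = ∑ c ∈ Finset.univ.filter (fun c : Composition m => 2 ≤ c.length),
        ∏ i, α (c.blocksFun i)) :
    ∃ C : ℝ, 0 < C ∧ ∀ m : ℕ, 1 ≤ m → α m ≤ C ^ m := by
  have key : ∀ m : ℕ, 1 ≤ m → 0 ≤ α m ∧ α m ≤ ff m := by
    intro m
    induction m using Nat.strong_induction_on with
    | _ m ih =>
    intro hm
    rcases eq_or_lt_of_le hm with h1 | h2
    · rw [← h1, hα1]
      constructor
      · norm_num
      · simp [ff]
    · have hm2 : 2 ≤ m := h2
      rw [hrec m hm2]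
      have hblock : ∀ c : Composition m, 2 ≤ c.length → ∀ i : Fin c.length,
          1 ≤ c.blocksFun i ∧ c.blocksFun i < m := by
        intro c hc i
        refine ⟨c.one_le_blocksFun i, ?_⟩
        -- each block < m since there are ≥ 2 positive blocks
        have hsum := c.sum_blocksFun
        have : ∃ j : Fin c.length, j ≠ i := by
          rcases i with ⟨iv, hiv⟩
          by_cases hiv0 : iv = 0
          · exact ⟨⟨1, by omega⟩, by simp [Fin.ext_iff, hiv0]⟩
          · exact ⟨⟨0, by omega⟩, by simp [Fin.ext_iff]; omega⟩
        obtain ⟨j, hj⟩ := this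
        have h1 : 1 ≤ c.blocksFun j := c.one_le_blocksFun j
        have : c.blocksFun i + c.blocksFun j ≤ ∑ k, c.blocksFun k := by
          rw [← Finset.sum_pair (a := i) (b := j) (Ne.symm hj)]
          apply Finset.sum_le_sum_of_subset_of_nonneg
          · intro x _; simp
          · intros; omega
        omega
      constructor
      · apply Finset.sum_nonneg
        intro c hc
        simp only [Finset.mem_filter] at hc
        apply Finset.prod_nonneg
        intro i _
        exact (ih _ (hblock c hc.2 i).2 (hblock c hc.2 i).1).1
      · have hle : ∑ c ∈ Finset.univ.filter (fun c : Composition m => 2 ≤ c.length),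
            ∏ i, α (c.blocksFun i) ≤ SS m := by
          unfold SS
          apply Finset.sum_le_sum
          intro c hc
          simp only [Finset.mem_filter] at hc
          rw [← prod_blocksFun ff c]
          apply Finset.prod_le_prod
          · intro i _
            exact (ih _ (hblock c hc.2 i).2 (hblock c hc.2 i).1).1
          · intro i _
            exact (ih _ (hblock c hc.2 i).2 (hblock c hc.2 i).1).2
        have hSS : SS m ≤ ff m := by
          have := TT_le m hm
          rw [TT_split hm] at this
          linarith
        linarith
  refine ⟨8, by norm_num, ?_⟩
  intro m hm
  have h1 := (key m hm).2
  have h2 : ff m ≤ 8 ^ m := by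
    unfold ff
    have hcat : (catalan (m-1) : ℝ) ≤ 4 ^ (m - 1) := by
      have : catalan (m-1) ≤ 4 ^ (m-1) := by
        have e1 : catalan (m-1) ≤ Nat.centralBinom (m-1) := by
          rw [catalan_eq_centralBinom_div]
          exact Nat.div_le_self _ _
        have e2 : Nat.centralBinom (m-1) ≤ 4 ^ (m-1) := by
          unfold Nat.centralBinom
          calc Nat.choose (2 * (m-1)) (m-1)
              ≤ ∑ k ∈ Finset.range (2*(m-1)+1), Nat.choose (2*(m-1)) k :=
                Finset.single_le_sum (f := fun k => Nat.choose (2*(m-1)) k)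
                  (fun _ _ => Nat.zero_le _) (by simp; omega)
            _ = 2 ^ (2*(m-1)) := Nat.sum_range_choose _
            _ = 4 ^ (m-1) := by rw [pow_mul]; norm_num
        omega
      exact_mod_cast this
    calc 2^m * (catalan (m-1) : ℝ) / 2 ≤ 2^m * 4^(m-1) / 2 := by
          apply div_le_div_of_nonneg_right ?_ (by norm_num)
          · exact mul_le_mul_of_nonneg_left hcat (by positivity)
      _ ≤ 8 ^ m := by
          have : (4:ℝ)^(m-1) ≤ 4^m := by
            apply pow_le_pow_right₀ (by norm_num) (by omega)
          have h8 : (8:ℝ)^m = 2^m * 4^m := by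
            rw [← mul_pow]; norm_num
          nlinarith [pow_pos (show (0:ℝ) < 2 by norm_num) m,
            pow_pos (show (0:ℝ) < 4 by norm_num) m, pow_nonneg (show (0:ℝ) ≤ 4 by norm_num) (m-1)]
  linarith
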